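/- If n and d are positive integers with d | n and n/d divisible by 8, then the transition matrix of the integral circulant graph ICG_n({d}) at time π/2 is the identity matrix. -/

import Mathlib

open Matrix Complex

/-- Adjacency matrix of the Cayley graph `Cay(Γ, S)`: `a, b` adjacent iff `a - b ∈ S`. -/
noncomputable def cayAdj {G : Type*} [AddGroup G] (S : Set G) : Matrix G G ℂ :=
  Matrix.of fun a b => S.indicator (fun _ => (1 : ℂ)) (a - b)

/-- Adjacency matrix of the integral circulant graph `ICG_n(D)`: the Cayley graph over `ℤ_n`
with connection set `∪_{d ∈ D} S_{ℤ_n}(d)`, where `S_{ℤ_n}(d) = {x : gcd(x, n) = d}`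
(with the convention `gcd(0, n) = n`). -/
noncomputable def icgAdj (n : ℕ) (D : Set ℕ) : Matrix (ZMod n) (ZMod n) ℂ :=
  cayAdj {x : ZMod n | Nat.gcd x.val n ∈ D}

/-- Transition matrix `H(t) = exp(i t A)` of a graph with adjacency matrix `A`. -/
noncomputable def transitionM {V : Type*} [Fintype V] [DecidableEq V]
    (A : Matrix V V ℂ) (t : ℝ) : Matrix V V ℂ :=
  NormedSpace.exp ((Complex.I * (t : ℂ)) • A)

lemma aux_four_dvd {m u : ℕ} (hm8 : 8 ∣ m) (hm0 : m ≠ 0) (hu : u ∣ m) (hsq : Squarefree u) :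
    4 ∣ m / u := by
  obtain ⟨k, hk⟩ := hu
  have hu0 : u ≠ 0 := hsq.ne_zero
  have hk0 : k ≠ 0 := by rintro rfl; simp [hk] at hm0
  have hmq : m / u = k := by rw [hk]; exact Nat.mul_div_cancel_left k (Nat.pos_of_ne_zero hu0)
  rw [hmq]
  by_contra h4
  have h2u : ¬ ((2:ℕ)^2 ∣ u) := by
    intro hd
    have := hsq 2 (by simpa [pow_two] using hd)
    simp [Nat.isUnit_iff] at this
  have hfu : u.factorization 2 ≤ 1 := by
    by_contra hle
    exact h2u ((Nat.Prime.pow_dvd_iff_le_factorization Nat.prime_two hu0).2 (by omega))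
  have hfk : k.factorization 2 ≤ 1 := by
    by_contra hle
    refine h4 ?_
    have := (Nat.Prime.pow_dvd_iff_le_factorization Nat.prime_two hk0).2
      (show 2 ≤ k.factorization 2 by omega)
    simpa using this
  have h8' : (2:ℕ)^3 ∣ u * k := by rw [← hk]; simpa using hm8
  have h3 := (Nat.Prime.pow_dvd_iff_le_factorization Nat.prime_two (mul_ne_zero hu0 hk0)).1 h8'
  rw [Nat.factorization_mul hu0 hk0] at h3
  simp only [Finsupp.add_apply] at h3
  omega

lemma aux_geom_sum {η : ℂ} {q : ℕ} (h : η ^ q = 1) :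
    ∑ t ∈ Finset.range q, η ^ t = if η = 1 then (q : ℂ) else 0 := by
  split_ifs with h1
  · simp [h1]
  · rw [geom_sum_eq h1, h]; simp

lemma aux_moebius_sum (k : ℕ) :
    (∑ u ∈ k.divisors, ArithmeticFunction.moebius u) = if k = 1 then 1 else 0 := by
  have h := congrArg (fun f => f k) ArithmeticFunction.moebius_mul_coe_zeta
  simp only [ArithmeticFunction.coe_mul_zeta_apply, ArithmeticFunction.one_apply] at h
  exact h


/-- If `n` and `d` are positive integers with `d ∣ n` and `8 ∣ n / d`, then
the transition matrix of the integral circulant graph `ICG_n({d})` at time `π/2` is the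
identity matrix. -/
theorem icg_periodic_of_eight_dvd (n d : ℕ) [NeZero n] (hd0 : 0 < d) (hdn : d ∣ n)
    (h8 : 8 ∣ n / d) :
    transitionM (icgAdj n {d}) (Real.pi / 2) = 1 := by
  classical
  have hn0 : n ≠ 0 := NeZero.ne n
  set m : ℕ := n / d with hmdef
  have hnm : n = d * m := (Nat.mul_div_cancel' hdn).symm
  have hm0 : m ≠ 0 := by rintro h; rw [h, mul_zero] at hnm; exact hn0 hnm
  set ζ : ℂ := Complex.exp (2 * Real.pi * Complex.I / n) with hζdef
  have hζ : IsPrimitiveRoot ζ n := Complex.isPrimitiveRoot_exp n hn0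
  have hzn : ζ ^ n = 1 := hζ.pow_eq_one
  have hEmod : ∀ k : ℕ, ζ ^ (k % n) = ζ ^ k := by
    intro k
    conv_rhs => rw [← Nat.mod_add_div k n]
    rw [pow_add, pow_mul, hzn, one_pow, mul_one]
  set e : ZMod n → ℂ := fun a => ζ ^ a.val with hedef
  have hE1 : ∀ a b : ZMod n, e (a + b) = e a * e b := by
    intro a b
    show ζ ^ (a + b).val = ζ ^ a.val * ζ ^ b.val
    rw [ZMod.val_add, hEmod, pow_add]
  have he0 : e 0 = 1 := by simp [hedef]
  have hne : (n : ℂ) ≠ 0 := Nat.cast_ne_zero.mpr hn0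
  -- orthogonality
  have horth : ∀ c : ZMod n, ∑ x : ZMod n, e (c * x) = if c = 0 then (n : ℂ) else 0 := by
    intro c
    split_ifs with hc
    · subst hc
      simp only [zero_mul, he0]
      simp [Finset.card_univ, ZMod.card]
    · have hshift : ∑ x : ZMod n, e (c * (x + 1)) = ∑ x : ZMod n, e (c * x) :=
        Fintype.sum_equiv (Equiv.addRight (1 : ZMod n)) _ _ (fun x => rfl)
      have h2 : e c * ∑ x : ZMod n, e (c * x) = ∑ x : ZMod n, e (c * x) := by
        rw [Finset.mul_sum, ← hshift]
        refine Finset.sum_congr rfl fun x _ => ?_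
        rw [← hE1]
        congr 1
        ring
      have hec : e c ≠ 1 := by
        intro h
        have hdvd := (hζ.pow_eq_one_iff_dvd c.val).mp h
        exact hc ((ZMod.val_eq_zero c).mp (Nat.eq_zero_of_dvd_of_lt hdvd (ZMod.val_lt c)))
      have h3 : (e c - 1) * ∑ x : ZMod n, e (c * x) = 0 := by
        rw [sub_mul, one_mul, h2, sub_self]
      exact (mul_eq_zero.mp h3).resolve_left (sub_ne_zero.mpr hec)
  -- DFT matrices
  set F : Matrix (ZMod n) (ZMod n) ℂ := Matrix.of (fun j x => e (j * x)) with hFdef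
  set F' : Matrix (ZMod n) (ZMod n) ℂ := Matrix.of (fun x k => e (-(x * k)) / n) with hF'def
  have hFF' : F * F' = 1 := by
    ext j k
    rw [Matrix.mul_apply]
    have hterm : ∀ x : ZMod n, F j x * F' x k = e ((j - k) * x) / n := by
      intro x
      show e (j * x) * (e (-(x * k)) / n) = _
      rw [← mul_div_assoc, ← hE1]
      congr 2
      ring
    rw [Finset.sum_congr rfl (fun x _ => hterm x), ← Finset.sum_div, horth]
    by_cases hjk : j = k
    · simp [hjk, Matrix.one_apply, div_self hne]
    · have hs : j - k ≠ 0 := sub_ne_zero.mpr hjk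
      simp [hs, Matrix.one_apply_ne hjk]
  have hF'F : F' * F = 1 := mul_eq_one_comm.mp hFF'
  set U : (Matrix (ZMod n) (ZMod n) ℂ)ˣ := ⟨F, F', hFF', hF'F⟩ with hUdef
  -- adjacency entries
  set f : ZMod n → ℂ := fun s => if Nat.gcd s.val n = d then (1 : ℂ) else 0 with hfdef
  have hAxy : ∀ x y : ZMod n, icgAdj n {d} x y = f (x - y) := by
    intro x y
    simp [icgAdj, cayAdj, Set.indicator_apply, hfdef, Set.mem_setOf_eq]
  set lam : ZMod n → ℂ := fun j => ∑ s : ZMod n, e (j * s) * f s with hlamdef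
  have hdiag : F * icgAdj n {d} = Matrix.diagonal lam * F := by
    ext j y
    rw [Matrix.mul_apply, Matrix.diagonal_mul]
    have h1 : ∀ x : ZMod n, F j x * icgAdj n {d} x y = e (j * x) * f (x - y) := by
      intro x; rw [hAxy]; rfl
    rw [Finset.sum_congr rfl (fun x _ => h1 x)]
    have h2 : ∑ x : ZMod n, e (j * x) * f (x - y)
        = ∑ s : ZMod n, e (j * (s + y)) * f s := by
      refine (Fintype.sum_equiv (Equiv.addRight y) _ _ fun s => ?_).symm
      simp [add_sub_cancel_right]
    rw [h2]
    have h3 : ∀ s : ZMod n, e (j * (s + y)) * f s = e (j * y) * (e (j * s) * f s) := by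
      intro s
      rw [mul_add, hE1]
      ring
    rw [Finset.sum_congr rfl (fun s _ => h3 s), ← Finset.mul_sum]
    show e (j * y) * lam j = lam j * F j y
    rw [mul_comm]
    rfl
  have hA : icgAdj n {d} = F' * (Matrix.diagonal lam * F) := by
    calc icgAdj n {d} = (F' * F) * icgAdj n {d} := by rw [hF'F, one_mul]
    _ = F' * (F * icgAdj n {d}) := by rw [Matrix.mul_assoc]
    _ = _ := by rw [hdiag]
  -- eigenvalues lie in 4ℤ
  have hlam : ∀ j : ZMod n, ∃ K : ℤ, lam j = 4 * K := by
    intro j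
    set a : ℕ := j.val with hadef
    set ξ : ℂ := ζ ^ d with hξdef
    have hξ_iff : ∀ k : ℕ, ξ ^ k = 1 ↔ m ∣ k := by
      intro k
      rw [hξdef, ← pow_mul, hζ.pow_eq_one_iff_dvd, hnm]
      exact Nat.mul_dvd_mul_iff_left hd0
    -- Step A: rewrite lam j as a Ramanujan-type sum
    have hstepA : lam j
        = ∑ y ∈ (Finset.range m).filter (fun y => Nat.gcd y m = 1), ξ ^ (a * y) := by
      have h1 : lam j
          = ∑ s ∈ Finset.univ.filter (fun s : ZMod n => Nat.gcd s.val n = d), e (j * s) := by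
        show (∑ s : ZMod n, e (j * s) * f s) = _
        rw [Finset.sum_filter]
        refine Finset.sum_congr rfl fun s _ => ?_
        by_cases h : Nat.gcd s.val n = d <;> simp [hfdef, h]
      rw [h1]
      refine Finset.sum_bij' (i := fun s _ => s.val / d)
        (j := fun y _ => ((d * y : ℕ) : ZMod n)) ?_ ?_ ?_ ?_ ?_
      · intro s hs
        have hgcd := (Finset.mem_filter.mp hs).2
        have hds : d ∣ s.val := hgcd ▸ Nat.gcd_dvd_left s.val n
        refine Finset.mem_filter.mpr ⟨Finset.mem_range.mpr ?_, ?_⟩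
        · rw [Nat.div_lt_iff_lt_mul hd0, mul_comm, ← hnm]
          exact ZMod.val_lt s
        · have hmul : Nat.gcd (d * (s.val / d)) (d * m) = d * Nat.gcd (s.val / d) m :=
            Nat.gcd_mul_left d _ _
          rw [Nat.mul_div_cancel' hds, ← hnm, hgcd] at hmul
          exact (Nat.eq_of_mul_eq_mul_left hd0 (by rw [mul_one]; exact hmul)).symm
      · intro y hy
        obtain ⟨hyr, hyg⟩ := Finset.mem_filter.mp hy
        rw [Finset.mem_range] at hyr
        have hlt : d * y < n := by
          rw [hnm]
          exact (Nat.mul_lt_mul_left hd0).mpr hyr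
        refine Finset.mem_filter.mpr ⟨Finset.mem_univ _, ?_⟩
        rw [ZMod.val_natCast_of_lt hlt, hnm, Nat.gcd_mul_left, hyg, mul_one]
      · intro s hs
        have hgcd := (Finset.mem_filter.mp hs).2
        have hds : d ∣ s.val := hgcd ▸ Nat.gcd_dvd_left s.val n
        show ((d * (s.val / d) : ℕ) : ZMod n) = s
        rw [Nat.mul_div_cancel' hds]
        exact ZMod.natCast_rightInverse s
      · intro y hy
        obtain ⟨hyr, -⟩ := Finset.mem_filter.mp hy
        rw [Finset.mem_range] at hyr
        have hlt : d * y < n := by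
          rw [hnm]
          exact (Nat.mul_lt_mul_left hd0).mpr hyr
        show ((d * y : ℕ) : ZMod n).val / d = y
        rw [ZMod.val_natCast_of_lt hlt]
        exact Nat.mul_div_cancel_left y hd0
      · intro s hs
        have hgcd := (Finset.mem_filter.mp hs).2
        have hds : d ∣ s.val := hgcd ▸ Nat.gcd_dvd_left s.val n
        have h1 : e (j * s) = ζ ^ (a * s.val) := by
          show ζ ^ (j * s).val = _
          rw [ZMod.val_mul, hEmod, hadef]
        show e (j * s) = ξ ^ (a * (s.val / d))
        rw [h1, hξdef, ← pow_mul]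
        congr 1
        conv_lhs => rw [← Nat.mul_div_cancel' hds]
        ring
    -- divisors of gcd
    have hgcd_div : ∀ y : ℕ, (Nat.gcd y m).divisors = m.divisors.filter (fun u => u ∣ y) := by
      intro y
      ext u
      simp only [Nat.mem_divisors, Finset.mem_filter]
      constructor
      · rintro ⟨hu, -⟩
        exact ⟨⟨hu.trans (Nat.gcd_dvd_right y m), hm0⟩, hu.trans (Nat.gcd_dvd_left y m)⟩
      · rintro ⟨⟨hum, -⟩, huy⟩
        exact ⟨Nat.dvd_gcd huy hum, fun h => hm0 (Nat.gcd_eq_zero_iff.mp h).2⟩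
    -- Step B: Moebius expansion
    have hstepB : lam j = ∑ u ∈ m.divisors, ((ArithmeticFunction.moebius u : ℤ) : ℂ) *
        ∑ y ∈ (Finset.range m).filter (fun y => u ∣ y), ξ ^ (a * y) := by
      rw [hstepA, Finset.sum_filter]
      have h1 : ∀ y : ℕ, (if Nat.gcd y m = 1 then ξ ^ (a * y) else 0)
          = ∑ u ∈ m.divisors.filter (fun u => u ∣ y),
              ((ArithmeticFunction.moebius u : ℤ) : ℂ) * ξ ^ (a * y) := by
        intro y
        rw [← Finset.sum_mul, ← hgcd_div y]
        have h2 : (∑ u ∈ (Nat.gcd y m).divisors, ((ArithmeticFunction.moebius u : ℤ) : ℂ))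
            = ((if Nat.gcd y m = 1 then 1 else 0 : ℤ) : ℂ) := by
          rw [← aux_moebius_sum]
          push_cast
          rfl
        rw [h2]
        by_cases h : Nat.gcd y m = 1 <;> simp [h]
      rw [Finset.sum_congr rfl fun y _ => h1 y]
      calc ∑ y ∈ Finset.range m, ∑ u ∈ m.divisors.filter (fun u => u ∣ y),
              ((ArithmeticFunction.moebius u : ℤ) : ℂ) * ξ ^ (a * y)
          = ∑ y ∈ Finset.range m, ∑ u ∈ m.divisors,
              if u ∣ y then ((ArithmeticFunction.moebius u : ℤ) : ℂ) * ξ ^ (a * y) else 0 := by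
            exact Finset.sum_congr rfl fun y _ => Finset.sum_filter _ _
        _ = ∑ u ∈ m.divisors, ∑ y ∈ Finset.range m,
              if u ∣ y then ((ArithmeticFunction.moebius u : ℤ) : ℂ) * ξ ^ (a * y) else 0 :=
            Finset.sum_comm
        _ = ∑ u ∈ m.divisors, ((ArithmeticFunction.moebius u : ℤ) : ℂ) *
              ∑ y ∈ (Finset.range m).filter (fun y => u ∣ y), ξ ^ (a * y) := by
            refine Finset.sum_congr rfl fun u _ => ?_
            rw [← Finset.sum_filter, Finset.mul_sum]
    -- Step C: evaluate the inner geometric sums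
    have hstepC : ∀ u ∈ m.divisors,
        (∑ y ∈ (Finset.range m).filter (fun y => u ∣ y), ξ ^ (a * y))
          = if m ∣ a * u then ((m / u : ℕ) : ℂ) else 0 := by
      intro u hu
      obtain ⟨hum, -⟩ := Nat.mem_divisors.mp hu
      have hu0 : u ≠ 0 := by
        rintro rfl
        exact hm0 (Nat.eq_zero_of_zero_dvd hum)
      obtain ⟨q, hq⟩ := hum
      have hq' : m / u = q := by
        rw [hq, Nat.mul_div_cancel_left q (Nat.pos_of_ne_zero hu0)]
      have hbij : (∑ y ∈ (Finset.range m).filter (fun y => u ∣ y), ξ ^ (a * y))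
          = ∑ t ∈ Finset.range q, (ξ ^ (a * u)) ^ t := by
        refine Finset.sum_bij' (i := fun y _ => y / u) (j := fun t _ => u * t) ?_ ?_ ?_ ?_ ?_
        · intro y hy
          obtain ⟨hyr, hyd⟩ := Finset.mem_filter.mp hy
          rw [Finset.mem_range] at hyr
          rw [Finset.mem_range, Nat.div_lt_iff_lt_mul (Nat.pos_of_ne_zero hu0), mul_comm, ← hq]
          exact hyr
        · intro t ht
          rw [Finset.mem_range] at ht
          refine Finset.mem_filter.mpr ⟨Finset.mem_range.mpr ?_, Dvd.intro t rfl⟩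
          rw [hq]
          exact (Nat.mul_lt_mul_left (Nat.pos_of_ne_zero hu0)).mpr ht
        · intro y hy
          show u * (y / u) = y
          exact Nat.mul_div_cancel' (Finset.mem_filter.mp hy).2
        · intro t ht
          show u * t / u = t
          exact Nat.mul_div_cancel_left t (Nat.pos_of_ne_zero hu0)
        · intro y hy
          obtain ⟨t, rfl⟩ := (Finset.mem_filter.mp hy).2
          show ξ ^ (a * (u * t)) = (ξ ^ (a * u)) ^ (u * t / u)
          rw [Nat.mul_div_cancel_left t (Nat.pos_of_ne_zero hu0)]
          simp only [hξdef, ← pow_mul]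
          congr 1
          ring
      have hpow : (ξ ^ (a * u)) ^ q = 1 := by
        rw [← pow_mul, hξ_iff]
        exact ⟨a, by rw [hq]; ring⟩
      rw [hbij, aux_geom_sum hpow]
      simp only [hξ_iff, hq']
    -- Step D: conclude
    refine ⟨∑ u ∈ m.divisors, ArithmeticFunction.moebius u *
        (if m ∣ a * u then ((m / u / 4 : ℕ) : ℤ) else 0), ?_⟩
    rw [hstepB, Finset.sum_congr rfl (fun u hu => by rw [hstepC u hu])]
    have hterm : ∀ u ∈ m.divisors,
        ((ArithmeticFunction.moebius u : ℤ) : ℂ) * (if m ∣ a * u then ((m / u : ℕ) : ℂ) else 0)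
        = 4 * ((ArithmeticFunction.moebius u *
            (if m ∣ a * u then ((m / u / 4 : ℕ) : ℤ) else 0) : ℤ) : ℂ) := by
      intro u hu
      by_cases hc : m ∣ a * u
      · simp only [if_pos hc]
        by_cases hμ : ArithmeticFunction.moebius u = 0
        · simp [hμ]
        · have hsq := ArithmeticFunction.moebius_ne_zero_iff_squarefree.mp hμ
          obtain ⟨w, hw⟩ := aux_four_dvd h8 hm0 (Nat.mem_divisors.mp hu).1 hsq
          rw [hw, Nat.mul_div_cancel_left w (by norm_num)]
          push_cast
          ring
      · simp [if_neg hc]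
    rw [Finset.sum_congr rfl hterm, ← Finset.mul_sum]
    congr 1
    push_cast
    rfl
  -- finish
  have hexp1 : ∀ j : ZMod n,
      Complex.exp (Complex.I * ((Real.pi / 2 : ℝ) : ℂ) * lam j) = 1 := by
    intro j
    obtain ⟨K, hK⟩ := hlam j
    rw [hK]
    have : Complex.I * ((Real.pi / 2 : ℝ) : ℂ) * (4 * K) = K * (2 * Real.pi * Complex.I) := by
      push_cast
      ring
    rw [this]
    exact Complex.exp_int_mul_two_pi_mul_I K
  rw [transitionM, hA]
  set c : ℂ := Complex.I * ((Real.pi / 2 : ℝ) : ℂ) with hcdef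
  have hsmul : c • (F' * (Matrix.diagonal lam * F))
      = (U⁻¹ : (Matrix (ZMod n) (ZMod n) ℂ)ˣ) * Matrix.diagonal (c • lam) * (U : (Matrix (ZMod n) (ZMod n) ℂ)ˣ) := by
    show c • (F' * (Matrix.diagonal lam * F)) = F' * Matrix.diagonal (c • lam) * F
    rw [Matrix.diagonal_smul, Matrix.mul_smul, Matrix.smul_mul, Matrix.mul_assoc]
  rw [hsmul, Matrix.exp_units_conj' U, Matrix.exp_diagonal]
  have hdone : NormedSpace.exp (c • lam) = fun _ => (1 : ℂ) := by
    funext j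
    rw [Pi.coe_exp]
    have : (c • lam) j = c * lam j := rfl
    rw [this, ← Complex.exp_eq_exp_ℂ]
    exact hexp1 j
  rw [hdone]
  show (F' : Matrix (ZMod n) (ZMod n) ℂ) * Matrix.diagonal (fun _ => (1:ℂ)) * F = 1
  rw [Matrix.diagonal_one, Matrix.mul_one, hF'F]
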